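/- Let f : ℝ^d → ℝ be differentiable and suppose that for all x₁, x₂ ∈ ℝ^d one has f(x₂) ≥ f(x₁) + ⟨∇f(x₁), x₂ − x₁⟩ (convexity) and that for every block ℓ ∈ {1,…,p}, every x ∈ ℝ^d and every h ∈ ℝ^{d_ℓ} the block quadratic upper bound f(x + U_ℓ h) ≤ f(x) + ⟨∇^{(ℓ)} f(x), h⟩ + (L_ℓ/2)‖h‖² holds. Then for every ℓ ∈ {1,…,p} and all x₁, x₂ ∈ ℝ^d: f(x₂) ≥ f(x₁) + ⟨∇f(x₁), x₂ − x₁⟩ + (1/(2L_ℓ))‖∇^{(ℓ)} f(x₁) − ∇^{(ℓ)} f(x₂)‖². -/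

import Mathlib

open RealInnerProductSpace

noncomputable section

/-- The `ℓ`-th block `ℝ^{d_ℓ}` of the decomposition `ℝ^d = ℝ^{d_1} × … × ℝ^{d_p}`. -/
abbrev Blk {p : ℕ} (d : Fin p → ℕ) (ℓ : Fin p) : Type := EuclideanSpace ℝ (Fin (d ℓ))

/-- The space `ℝ^d = ℝ^{d_1} × … × ℝ^{d_p}` with the Euclidean (ℓ²) norm. -/
abbrev Sp {p : ℕ} (d : Fin p → ℕ) : Type := PiLp 2 (Blk d)

/-- The selection embedding `U_ℓ : ℝ^{d_ℓ} → ℝ^d` placing `h` in block `ℓ` and `0` elsewhere. -/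
def inj {p : ℕ} (d : Fin p → ℕ) (ℓ : Fin p) (h : Blk d ℓ) : Sp d :=
  (WithLp.equiv 2 (∀ ℓ, Blk d ℓ)).symm (Pi.single ℓ h)

/-- Membership in the class `F^coord_{0,L}(ℝ^d)`: convex, differentiable, and for each block
`ℓ` the partial gradient `∇^{(ℓ)} f` is `L_ℓ`-Lipschitz along the block `ℓ`. -/
def IsCoordSmooth {p : ℕ} (d : Fin p → ℕ) (L : Fin p → ℝ) (f : Sp d → ℝ) : Prop :=
  ConvexOn ℝ Set.univ f ∧ Differentiable ℝ f ∧
    ∀ (ℓ : Fin p) (x : Sp d) (h : Blk d ℓ),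
      ‖gradient f (x + inj d ℓ h) ℓ - gradient f x ℓ‖ ≤ L ℓ * ‖h‖

lemma inner_inj {p : ℕ} {d : Fin p → ℕ} (g : Sp d) (ℓ : Fin p) (h : Blk d ℓ) :
    ⟪g, inj d ℓ h⟫ = ⟪g ℓ, h⟫ := by
  simp only [inj, PiLp.inner_apply, WithLp.equiv_symm_apply, PiLp.toLp_apply]
  rw [Finset.sum_eq_single ℓ]
  · simp
  · intro b _ hb; simp [Pi.single_apply, hb]
  · simp

theorem lower_bound_of_convexity_and_block_upper_bound {p : ℕ} {d : Fin p → ℕ}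
    (L : Fin p → ℝ) (hL : ∀ ℓ, 0 < L ℓ) (f : Sp d → ℝ) (hdiff : Differentiable ℝ f)
    (hconv : ∀ x₁ x₂ : Sp d, f x₂ ≥ f x₁ + ⟪gradient f x₁, x₂ - x₁⟫)
    (hupper : ∀ (ℓ : Fin p) (x : Sp d) (h : Blk d ℓ),
      f (x + inj d ℓ h) ≤ f x + ⟪gradient f x ℓ, h⟫ + L ℓ / 2 * ‖h‖ ^ 2) :
    ∀ (ℓ : Fin p) (x₁ x₂ : Sp d),
      f x₂ ≥ f x₁ + ⟪gradient f x₁, x₂ - x₁⟫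
        + 1 / (2 * L ℓ) * ‖gradient f x₁ ℓ - gradient f x₂ ℓ‖ ^ 2 := by
  intro ℓ x₁ x₂
  set g₁ := gradient f x₁
  set g₂ := gradient f x₂
  set v : Blk d ℓ := g₁ ℓ - g₂ ℓ with hv
  set h : Blk d ℓ := (1 / L ℓ) • v with hh
  have h1 := hconv x₁ (x₂ + inj d ℓ h)
  have h2 := hupper ℓ x₂ h
  have key : ⟪g₁, x₂ + inj d ℓ h - x₁⟫
      = ⟪g₁, x₂ - x₁⟫ + ⟪g₁ ℓ, h⟫ := by
    rw [show x₂ + inj d ℓ h - x₁ = (x₂ - x₁) + inj d ℓ h by abel,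
      inner_add_right, inner_inj]
  have hvv : ⟪v, h⟫ = (1 / L ℓ) * ‖v‖ ^ 2 := by
    rw [hh, real_inner_smul_right, real_inner_self_eq_norm_sq]
  have hnh : ‖h‖ ^ 2 = (1 / L ℓ)^2 * ‖v‖ ^ 2 := by
    rw [hh, norm_smul]
    simp [mul_pow, abs_of_pos (one_div_pos.mpr (hL ℓ))]
  have hg1h : ⟪g₁ ℓ, h⟫ = ⟪g₂ ℓ, h⟫ + ⟪v, h⟫ := by
    rw [hv, inner_sub_left]; ring
  have hLpos := hL ℓ
  have : f x₁ + ⟪g₁, x₂ - x₁⟫ + ⟪g₂ ℓ, h⟫ + (1 / L ℓ) * ‖v‖ ^ 2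
      ≤ f x₂ + ⟪g₂ ℓ, h⟫ + L ℓ / 2 * ((1 / L ℓ)^2 * ‖v‖ ^ 2) := by
    calc f x₁ + ⟪g₁, x₂ - x₁⟫ + ⟪g₂ ℓ, h⟫ + (1 / L ℓ) * ‖v‖ ^ 2
        = f x₁ + ⟪g₁, x₂ + inj d ℓ h - x₁⟫ := by
          rw [key, hg1h, hvv]; ring
      _ ≤ f (x₂ + inj d ℓ h) := h1
      _ ≤ f x₂ + ⟪g₂ ℓ, h⟫ + L ℓ / 2 * ‖h‖ ^ 2 := h2
      _ = _ := by rw [hnh]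
  have goal : f x₁ + ⟪g₁, x₂ - x₁⟫ + 1 / (2 * L ℓ) * ‖v‖ ^ 2 ≤ f x₂ := by
    have e1 : L ℓ / 2 * ((1 / L ℓ)^2 * ‖v‖ ^ 2) = 1 / (2 * L ℓ) * ‖v‖ ^ 2 := by
      field_simp
    have e2 : (1 / L ℓ) * ‖v‖ ^ 2 = 2 * (1 / (2 * L ℓ) * ‖v‖ ^ 2) := by
      field_simp
    linarith [this]
  exact goal
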